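/- arXiv:1009.5979 — 6 statements merged into one kernel-verified Lean document; each statement's English description precedes it below -/
import Mathlib

section
/- Let R be an L×L Hermitian positive definite complex matrix, A an L×D complex matrix of rank D (D ≤ L), Φ a D×D Hermitian complex matrix, and suppose T is an invertible D×D matrix with TᴴΦT = Γ diagonal (with diagonal entries γ₁,…,γ_D) and Tᴴ(AᴴR⁻¹A)⁻¹T = I_D. Set A_ε := A·(T⁻¹)ᴴ and let a_{ε,i} denote the i-th column of A_ε. Then for each i, (A·Φ·Aᴴ)·(R⁻¹a_{ε,i}) = γ_i · R·(R⁻¹a_{ε,i}); that is, γ₁,…,γ_D are generalized eigenvalues of the matrix pair (AΦAᴴ, R) with generalized eigenvectors R⁻¹a_{ε,1},…,R⁻¹a_{ε,D}. -/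
open Matrix
open scoped ComplexOrder

/-- Let `R` be an `L × L` Hermitian positive definite matrix, `A` an
`L × D` complex matrix of rank `D` (`D ≤ L`), `Φ` a `D × D` Hermitian matrix, and
`T` an invertible `D × D` matrix with `Tᴴ Φ T = Γ = diagonal γ` and
`Tᴴ (Aᴴ R⁻¹ A)⁻¹ T = I`.  Setting `A_ε := A (T⁻¹)ᴴ` with columns `a_{ε,i}`, for
each `i` one has `(A Φ Aᴴ)·(R⁻¹ a_{ε,i}) = γ_i · R·(R⁻¹ a_{ε,i})`, i.e. the
`γ_i` are generalized eigenvalues of the pair `(A Φ Aᴴ, R)` with generalized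
eigenvectors `R⁻¹ a_{ε,i}`. -/
theorem stmt4 (L D : ℕ) (hD : D ≤ L)
    (R : Matrix (Fin L) (Fin L) ℂ) (hR : R.PosDef)
    (A : Matrix (Fin L) (Fin D) ℂ) (hrank : A.rank = D)
    (Φ : Matrix (Fin D) (Fin D) ℂ) (hΦ : Φ.IsHermitian)
    (T : Matrix (Fin D) (Fin D) ℂ) (hT : IsUnit T.det)
    (γ : Fin D → ℂ)
    (hdiag : Tᴴ * Φ * T = Matrix.diagonal γ)
    (hnorm : Tᴴ * (Aᴴ * R⁻¹ * A)⁻¹ * T = 1) :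
    ∀ i : Fin D,
      (A * Φ * Aᴴ) *ᵥ (R⁻¹ *ᵥ (fun j => (A * (T⁻¹)ᴴ) j i))
        = γ i • (R *ᵥ (R⁻¹ *ᵥ (fun j => (A * (T⁻¹)ᴴ) j i))) := by
  intro i
  have hTH : IsUnit Tᴴ.det := by
    rw [Matrix.det_conjTranspose]; exact hT.star
  -- From hnorm, (Aᴴ R⁻¹ A)⁻¹ = (Tᴴ)⁻¹ * T⁻¹
  have hGinv : (Aᴴ * R⁻¹ * A)⁻¹ = (Tᴴ)⁻¹ * T⁻¹ := by
    have h := congrArg (fun M => (Tᴴ)⁻¹ * M * T⁻¹) hnorm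
    simp only [← Matrix.mul_assoc, Matrix.nonsing_inv_mul _ hTH,
      Matrix.one_mul, Matrix.mul_one] at h
    rw [Matrix.mul_assoc, Matrix.mul_nonsing_inv _ hT, Matrix.mul_one] at h
    exact h
  have hGdet : IsUnit (Aᴴ * R⁻¹ * A).det := by
    rw [← Matrix.isUnit_nonsing_inv_det_iff, hGinv, Matrix.det_mul]
    exact ((Matrix.isUnit_nonsing_inv_det_iff.mpr hTH).mul
      (Matrix.isUnit_nonsing_inv_det_iff.mpr hT))
  have hG : Aᴴ * R⁻¹ * A = T * Tᴴ := by
    have h1 : ((Aᴴ * R⁻¹ * A)⁻¹)⁻¹ = Aᴴ * R⁻¹ * A :=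
      Matrix.nonsing_inv_nonsing_inv _ hGdet
    rw [hGinv, Matrix.mul_inv_rev, Matrix.nonsing_inv_nonsing_inv _ hT,
      Matrix.nonsing_inv_nonsing_inv _ hTH] at h1
    exact h1.symm
  -- Φ * T = (Tᴴ)⁻¹ * diagonal γ
  have hPhiT : Φ * T = (Tᴴ)⁻¹ * Matrix.diagonal γ := by
    have h := congrArg (fun M => (Tᴴ)⁻¹ * M) hdiag
    simpa [← Matrix.mul_assoc, Matrix.nonsing_inv_mul _ hTH] using h
  -- Key matrix identity
  have key : A * Φ * Aᴴ * (R⁻¹ * (A * (T⁻¹)ᴴ))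
      = (A * (T⁻¹)ᴴ) * Matrix.diagonal γ := by
    have hct : (T⁻¹)ᴴ = (Tᴴ)⁻¹ := (Matrix.conjTranspose_nonsing_inv T)
    calc A * Φ * Aᴴ * (R⁻¹ * (A * (T⁻¹)ᴴ))
        = A * Φ * (Aᴴ * R⁻¹ * A * (T⁻¹)ᴴ) := by
          simp [Matrix.mul_assoc]
      _ = A * Φ * (T * (Tᴴ * (Tᴴ)⁻¹)) := by
          rw [hG, hct]; simp [Matrix.mul_assoc]
      _ = A * (Φ * T) := by
          rw [Matrix.mul_nonsing_inv _ hTH, Matrix.mul_one, Matrix.mul_assoc]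
      _ = A * (T⁻¹)ᴴ * Matrix.diagonal γ := by
          rw [hPhiT, hct, Matrix.mul_assoc]
  have hcol : (fun j => (A * (T⁻¹)ᴴ) j i)
      = (A * (T⁻¹)ᴴ) *ᵥ Pi.single i 1 := by
    simp [Matrix.mulVec_single]; rfl
  rw [hcol, Matrix.mulVec_mulVec, Matrix.mulVec_mulVec, Matrix.mulVec_mulVec,
    Matrix.mul_nonsing_inv _ hR.det_pos.ne'.isUnit, Matrix.one_mulVec,
    Matrix.mul_assoc (A * Φ * Aᴴ), key, ← Matrix.mulVec_mulVec,
    Matrix.diagonal_mulVec_single]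
  ext j
  simp [Matrix.mulVec_single, mul_comm]
end

section
/- Let R be an L×L Hermitian positive definite complex matrix, a₀ ∈ ℂᴸ, A_ε an L×D complex matrix with A_εᴴR⁻¹A_ε = I_D, Γ = diag(γ₁,…,γ_D) with γ_i ∈ ℝ, and c ∈ ℂ. Let λ ∈ ℂ satisfy λ ≠ 1 and λ − 1 ≠ γ_i for every i, and suppose w ∈ ℂᴸ satisfies (c·a₀a₀ᴴ + A_ε Γ A_εᴴ)·w = (λ−1)·R·w. Then, with η₀ := c·(a₀ᴴw)/(λ−1) and ψ̃_i := a_{ε,i}ᴴ R⁻¹ a₀ (where a_{ε,i} is the i-th column of A_ε), the weight vector has the closed form w = η₀·[ R⁻¹a₀ + Σ_{i=1}^{D} (γ_i·ψ̃_i/(λ − 1 − γ_i))·R⁻¹a_{ε,i} ]. -/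
open Matrix
open scoped ComplexOrder

/-- Let `R` be an `L × L` Hermitian positive definite matrix,
`a₀ ∈ ℂᴸ`, `A_ε` an `L × D` matrix with `A_εᴴ R⁻¹ A_ε = I`,
`Γ = diag(γ₁,…,γ_D)` with real `γ_i`, and `c ∈ ℂ`.  If `λ ≠ 1`,
`λ − 1 ≠ γ_i` for every `i`, and `w` satisfies
`(c·a₀a₀ᴴ + A_ε Γ A_εᴴ)·w = (λ−1)·R·w`, then with
`η₀ := c·(a₀ᴴw)/(λ−1)` and `ψ̃_i := a_{ε,i}ᴴ R⁻¹ a₀`,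
`w = η₀·[R⁻¹a₀ + Σᵢ (γ_i ψ̃_i/(λ−1−γ_i))·R⁻¹a_{ε,i}]`. -/
theorem stmt5 (L D : ℕ)
    (R : Matrix (Fin L) (Fin L) ℂ) (hR : R.PosDef)
    (a₀ : Fin L → ℂ)
    (Aε : Matrix (Fin L) (Fin D) ℂ) (hAε : Aεᴴ * R⁻¹ * Aε = 1)
    (γ : Fin D → ℝ) (c lam : ℂ)
    (hlam1 : lam ≠ 1) (hlamγ : ∀ i, lam - 1 ≠ (γ i : ℂ))
    (w : Fin L → ℂ)
    (hw : (c • vecMulVec a₀ (star a₀)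
            + Aε * Matrix.diagonal (fun i => (γ i : ℂ)) * Aεᴴ) *ᵥ w
          = (lam - 1) • (R *ᵥ w)) :
    w = (c * (star a₀ ⬝ᵥ w) / (lam - 1)) •
        (R⁻¹ *ᵥ a₀
          + ∑ i : Fin D,
              ((γ i : ℂ) * (star (fun j => Aε j i) ⬝ᵥ (R⁻¹ *ᵥ a₀))
                  / (lam - 1 - (γ i : ℂ))) • (R⁻¹ *ᵥ (fun j => Aε j i))) := by
  have hdet : IsUnit R.det := isUnit_iff_isUnit_det _ |>.1 hR.isUnit
  have hinv : R⁻¹ * R = 1 := nonsing_inv_mul R hdet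
  have h1 : lam - 1 ≠ 0 := sub_ne_zero.mpr hlam1
  have h2 : ∀ i, lam - 1 - (γ i : ℂ) ≠ 0 := fun i => sub_ne_zero.mpr (hlamγ i)
  set α := star a₀ ⬝ᵥ w with hα
  set Γ : Matrix (Fin D) (Fin D) ℂ := Matrix.diagonal (fun i => (γ i : ℂ)) with hΓ
  set u : Fin D → ℂ := Aεᴴ *ᵥ w with hu
  set ψ : Fin D → ℂ := Aεᴴ *ᵥ (R⁻¹ *ᵥ a₀) with hψ
  have hvmv : vecMulVec a₀ (star a₀) *ᵥ w = α • a₀ := by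
    ext j
    simp only [vecMulVec_apply, mulVec, dotProduct, Pi.smul_apply, smul_eq_mul, hα]
    rw [Finset.sum_mul]
    exact Finset.sum_congr rfl fun x _ => by ring
  have key : (lam - 1) • w = (c * α) • (R⁻¹ *ᵥ a₀) + (R⁻¹ * Aε * Γ) *ᵥ u := by
    have h := congrArg (fun v => R⁻¹ *ᵥ v) hw
    simp only [add_mulVec, smul_mulVec, hvmv, mulVec_add, mulVec_smul,
      mulVec_mulVec, smul_smul] at h
    rw [hinv, one_mulVec] at h
    rw [← h]
    congr 1
    rw [hu, mulVec_mulVec]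
    simp only [← Matrix.mul_assoc]
  have hui : ∀ i, u i = c * α * ψ i / (lam - 1 - (γ i : ℂ)) := by
    have h := congrArg (fun v => Aεᴴ *ᵥ v) key
    simp only [mulVec_add, mulVec_smul, mulVec_mulVec] at h
    have hm : Aεᴴ * (R⁻¹ * Aε * Γ) = Γ := by
      rw [← Matrix.mul_assoc, ← Matrix.mul_assoc, hAε, Matrix.one_mul]
    rw [hm] at h
    intro i
    have hi := congrFun h i
    have hψ' : ψ = (Aεᴴ * R⁻¹) *ᵥ a₀ := by rw [hψ, mulVec_mulVec]
    rw [← hψ', ← hu] at hi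
    simp only [Pi.smul_apply, Pi.add_apply, smul_eq_mul, hΓ, mulVec_diagonal] at hi
    have h2i := h2 i
    field_simp
    linear_combination hi
  have hψeq : ∀ i, star (fun j => Aε j i) ⬝ᵥ (R⁻¹ *ᵥ a₀) = ψ i := by
    intro i
    rw [hψ, mulVec_mulVec]
    simp only [mulVec, dotProduct, Matrix.mul_apply, conjTranspose_apply,
      Finset.sum_mul, Finset.mul_sum, Pi.star_apply]
    rw [Finset.sum_comm]
    exact Finset.sum_congr rfl fun k _ => Finset.sum_congr rfl fun j _ => by ring
  have hsum : (R⁻¹ * Aε * Γ) *ᵥ u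
      = ∑ i : Fin D, ((γ i : ℂ) * u i) • (R⁻¹ *ᵥ (fun j => Aε j i)) := by
    ext j
    simp only [Finset.sum_apply, Pi.smul_apply, smul_eq_mul, mulVec, dotProduct,
      hΓ, Matrix.mul_diagonal]
    refine Finset.sum_congr rfl fun i _ => ?_
    rw [Matrix.mul_apply, Finset.sum_mul, Finset.sum_mul, Finset.mul_sum]
    refine Finset.sum_congr rfl fun k _ => by ring
  have hsc : (lam - 1) * (c * α / (lam - 1)) = c * α := by field_simp
  apply smul_right_injective (Fin L → ℂ) h1
  beta_reduce
  rw [key, hsum, smul_smul, hsc, smul_add, Finset.smul_sum]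
  congr 1
  refine Finset.sum_congr rfl fun i _ => ?_
  rw [smul_smul, hψeq i, hui i]
  congr 1
  field_simp
end

section
/- Let δ be a real number with 0 < δ < 1. Define γ₋ := √(δ² + δ) − δ and, for x ∈ ℝ, f(x) := (1/2)·[1 − x − √((1−x)² − 4δ|x|)]. Then: (i) 0 ≤ γ₋ ≤ 1/2, so 1 − 2γ₋ ≥ 0; (ii) for every x ≤ 1 − 2γ₋ one has (1−x)² − 4δ|x| ≥ 0, so f(x) is well-defined as a real number; and (iii) for every x ≤ 1 − 2γ₋, 0 ≤ f(x) ≤ max{δ, γ₋}. -/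
/-- For real `δ` with `0 < δ < 1`, define
`γ₋ := √(δ² + δ) − δ` and `f(x) := (1/2)·[1 − x − √((1−x)² − 4δ|x|)]`.  Then:
(i) `0 ≤ γ₋ ≤ 1/2`, so `1 − 2γ₋ ≥ 0`;
(ii) for every `x ≤ 1 − 2γ₋`, `(1−x)² − 4δ|x| ≥ 0` (so `f(x)` is a
well-defined real number); and
(iii) for every `x ≤ 1 − 2γ₋`, `0 ≤ f(x) ≤ max{δ, γ₋}`. -/
theorem stmt7 (δ : ℝ) (hδ0 : 0 < δ) (hδ1 : δ < 1) :
    let γm : ℝ := Real.sqrt (δ ^ 2 + δ) - δ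
    let f : ℝ → ℝ := fun x =>
      (1 / 2) * (1 - x - Real.sqrt ((1 - x) ^ 2 - 4 * δ * |x|))
    ((0 ≤ γm ∧ γm ≤ 1 / 2) ∧ 0 ≤ 1 - 2 * γm) ∧
    (∀ x : ℝ, x ≤ 1 - 2 * γm → 0 ≤ (1 - x) ^ 2 - 4 * δ * |x|) ∧
    (∀ x : ℝ, x ≤ 1 - 2 * γm → 0 ≤ f x ∧ f x ≤ max δ γm) := by
  intro γm f
  have hγdef : γm = Real.sqrt (δ ^ 2 + δ) - δ := rfl
  have hfdef : ∀ x : ℝ, f x =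
      (1 / 2) * (1 - x - Real.sqrt ((1 - x) ^ 2 - 4 * δ * |x|)) := fun _ => rfl
  have hs0 : (0:ℝ) ≤ δ ^ 2 + δ := by positivity
  have hs2 : Real.sqrt (δ ^ 2 + δ) ^ 2 = δ ^ 2 + δ := Real.sq_sqrt hs0
  have hsnn : 0 ≤ Real.sqrt (δ ^ 2 + δ) := Real.sqrt_nonneg _
  have hδs : δ ≤ Real.sqrt (δ ^ 2 + δ) := by nlinarith
  have hs12 : Real.sqrt (δ ^ 2 + δ) ≤ δ + 1 / 2 := by nlinarith
  have hγ0 : 0 ≤ γm := by rw [hγdef]; linarith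
  have hγhalf : γm ≤ 1 / 2 := by rw [hγdef]; linarith
  have hγid : γm ^ 2 + 2 * δ * γm - δ = 0 := by rw [hγdef]; nlinarith
  have hdisc : ∀ x : ℝ, x ≤ 1 - 2 * γm → 0 ≤ (1 - x) ^ 2 - 4 * δ * |x| := by
    intro x hx
    rcases abs_cases x with ⟨h1, h2⟩ | ⟨h1, h2⟩
    · rw [h1]
      nlinarith [mul_nonneg (add_nonneg hδ0.le hγ0) (sub_nonneg.2 hx)]
    · rw [h1]
      nlinarith [sq_nonneg (x + 1)]
  refine ⟨⟨⟨hγ0, hγhalf⟩, by linarith⟩, hdisc, ?_⟩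
  intro x hx
  have hE := hdisc x hx
  have hx1 : x ≤ 1 := by linarith
  have habs : 0 ≤ 4 * δ * |x| := by positivity
  have hle : Real.sqrt ((1 - x) ^ 2 - 4 * δ * |x|) ≤ 1 - x := by
    calc Real.sqrt ((1 - x) ^ 2 - 4 * δ * |x|) ≤ Real.sqrt ((1 - x) ^ 2) :=
          Real.sqrt_le_sqrt (by linarith)
      _ = 1 - x := Real.sqrt_sq (by linarith)
  constructor
  · rw [hfdef]; linarith
  · -- key lower bounds on the square root
    have key : ∀ c : ℝ, 0 ≤ c → (1 - x - 2 * c) ^ 2 ≤ (1 - x) ^ 2 - 4 * δ * |x| →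
        1 - x - 2 * c ≤ Real.sqrt ((1 - x) ^ 2 - 4 * δ * |x|) := by
      intro c hc hsq
      rcases le_or_gt (1 - x - 2 * c) 0 with h | h
      · exact h.trans (Real.sqrt_nonneg _)
      · calc 1 - x - 2 * c = Real.sqrt ((1 - x - 2 * c) ^ 2) :=
              (Real.sqrt_sq h.le).symm
          _ ≤ _ := Real.sqrt_le_sqrt hsq
    rcases abs_cases x with ⟨h1, h2⟩ | ⟨h1, h2⟩
    · -- x ≥ 0 : f x ≤ γm
      have hb : 1 - x - 2 * γm ≤ Real.sqrt ((1 - x) ^ 2 - 4 * δ * |x|) := by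
        apply key _ hγ0
        rw [h1]
        nlinarith [mul_nonneg (add_nonneg hδ0.le hγ0) (sub_nonneg.2 hx)]
      have : f x ≤ γm := by rw [hfdef]; linarith
      exact this.trans (le_max_right _ _)
    · -- x ≤ 0 : f x ≤ δ
      have hb : 1 - x - 2 * δ ≤ Real.sqrt ((1 - x) ^ 2 - 4 * δ * |x|) := by
        apply key _ hδ0.le
        rw [h1]
        nlinarith
      have : f x ≤ δ := by rw [hfdef]; linarith
      exact this.trans (le_max_left _ _)
end

section
/- Let γ₀ > γ₁ > 0, s > 0 and κ > 0 be real numbers, set δ := κ²/s and x := γ₁/γ₀, and assume (1−x)² ≥ 4δx. Then the feasible set F := { f ∈ ℝ : f > 0 and (γ₁κ/s)·f² − (γ₀−γ₁)·f + γ₀κ ≤ 0 } is a nonempty closed interval [f₋, f₊] with 0 < f₋ ≤ f₊, and the minimum of γ₀κ/f over f ∈ F equals γ₀·(1/2)·[(1−x) − √((1−x)² − 4δx)], attained at f = f₊. -/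
/-- Let `γ₀ > γ₁ > 0`, `s > 0`, `κ > 0`, `δ := κ²/s`,
`x := γ₁/γ₀`, and assume `(1−x)² ≥ 4δx`.  Then the feasible set
`F := {f : f > 0 ∧ (γ₁κ/s)·f² − (γ₀−γ₁)·f + γ₀κ ≤ 0}` is a nonempty closed
interval `[f₋, f₊]` with `0 < f₋ ≤ f₊`, and the minimum of `γ₀κ/f` over
`f ∈ F` equals `γ₀·(1/2)·[(1−x) − √((1−x)² − 4δx)]`, attained at `f = f₊`. -/
theorem stmt8 (γ₀ γ₁ s κ : ℝ) (h01 : γ₁ < γ₀) (h1 : 0 < γ₁) (hs : 0 < s)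
    (hκ : 0 < κ)
    (hfeas : (1 - γ₁ / γ₀) ^ 2 ≥ 4 * (κ ^ 2 / s) * (γ₁ / γ₀)) :
    let δ : ℝ := κ ^ 2 / s
    let x : ℝ := γ₁ / γ₀
    let F : Set ℝ :=
      {f | 0 < f ∧ (γ₁ * κ / s) * f ^ 2 - (γ₀ - γ₁) * f + γ₀ * κ ≤ 0}
    ∃ fm fp : ℝ, 0 < fm ∧ fm ≤ fp ∧ F = Set.Icc fm fp ∧
      IsLeast ((fun f => γ₀ * κ / f) '' F)
        (γ₀ * ((1 / 2) * ((1 - x) - Real.sqrt ((1 - x) ^ 2 - 4 * δ * x)))) ∧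
      γ₀ * κ / fp
        = γ₀ * ((1 / 2) * ((1 - x) - Real.sqrt ((1 - x) ^ 2 - 4 * δ * x))) := by
  intro δ x F
  have hγ₀ : 0 < γ₀ := h1.trans h01
  obtain ⟨a, ha_def⟩ : ∃ y : ℝ, y = γ₁ * κ / s := ⟨_, rfl⟩
  have ha : 0 < a := by rw [ha_def]; positivity
  have hb : 0 < γ₀ - γ₁ := sub_pos.mpr h01
  obtain ⟨D, hD_def⟩ : ∃ y : ℝ, y = (γ₀ - γ₁) ^ 2 - 4 * a * (γ₀ * κ) := ⟨_, rfl⟩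
  have hDγ : D = γ₀ ^ 2 * ((1 - x) ^ 2 - 4 * δ * x) := by
    rw [hD_def, ha_def]
    show _ = γ₀ ^ 2 * ((1 - γ₁ / γ₀) ^ 2 - 4 * (κ ^ 2 / s) * (γ₁ / γ₀))
    field_simp
  have hD : 0 ≤ D := by
    rw [hDγ]
    exact mul_nonneg (sq_nonneg _) (sub_nonneg.mpr hfeas)
  have hsq : Real.sqrt D ^ 2 = D := Real.sq_sqrt hD
  have hsnn : 0 ≤ Real.sqrt D := Real.sqrt_nonneg D
  have hac : 0 < a * (γ₀ * κ) := mul_pos ha (mul_pos hγ₀ hκ)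
  have hslt : Real.sqrt D < γ₀ - γ₁ := by nlinarith [hsq, hac, hD_def]
  obtain ⟨fm, hfm_def⟩ : ∃ y : ℝ, y = ((γ₀ - γ₁) - Real.sqrt D) / (2 * a) := ⟨_, rfl⟩
  obtain ⟨fp, hfp_def⟩ : ∃ y : ℝ, y = ((γ₀ - γ₁) + Real.sqrt D) / (2 * a) := ⟨_, rfl⟩
  have hfm : 0 < fm := hfm_def ▸ div_pos (by linarith) (by linarith)
  have hfmfp : fm ≤ fp := by
    rw [hfm_def, hfp_def]
    gcongr <;> linarith
  have hfp_pos : 0 < fp := hfm.trans_le hfmfp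
  have h2a : (2 * a) ≠ 0 := by positivity
  have hsum : a * (fm + fp) = γ₀ - γ₁ := by
    rw [hfm_def, hfp_def]; field_simp; ring
  have hprod : a * (fm * fp) = γ₀ * κ := by
    rw [hfm_def, hfp_def]
    field_simp
    nlinarith [hsq, hD_def]
  have hquad : ∀ f : ℝ, a * f ^ 2 - (γ₀ - γ₁) * f + γ₀ * κ
      = a * ((f - fm) * (f - fp)) := by
    intro f
    linear_combination f * hsum - hprod
  have hF : F = Set.Icc fm fp := by
    ext f
    show (0 < f ∧ γ₁ * κ / s * f ^ 2 - (γ₀ - γ₁) * f + γ₀ * κ ≤ 0) ↔ _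
    rw [← ha_def, Set.mem_Icc]
    constructor
    · rintro ⟨hf0, hineq⟩
      rw [hquad f] at hineq
      have hle : (f - fm) * (f - fp) ≤ 0 := by
        have h0 : a * ((f - fm) * (f - fp)) ≤ a * 0 := by rwa [mul_zero]
        exact le_of_mul_le_mul_left h0 ha
      constructor
      · by_contra h
        push_neg at h
        have hp : 0 < (fm - f) * (fp - f) :=
          mul_pos (sub_pos.mpr h) (sub_pos.mpr (h.trans_le hfmfp))
        have heq : (fm - f) * (fp - f) = (f - fm) * (f - fp) := by ring
        linarith [heq ▸ hp]
      · by_contra h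
        push_neg at h
        have hp : 0 < (f - fm) * (f - fp) :=
          mul_pos (sub_pos.mpr (hfmfp.trans_lt h)) (sub_pos.mpr h)
        linarith
    · rintro ⟨hf1, hf2⟩
      refine ⟨hfm.trans_le hf1, ?_⟩
      rw [hquad f]
      have hX : (f - fm) * (f - fp) ≤ 0 :=
        mul_nonpos_of_nonneg_of_nonpos (sub_nonneg.mpr hf1) (sub_nonpos.mpr hf2)
      exact mul_nonpos_of_nonneg_of_nonpos ha.le hX
  have hval : γ₀ * κ / fp = ((γ₀ - γ₁) - Real.sqrt D) / 2 := by
    rw [hfp_def, div_div_eq_mul_div, div_eq_div_iff (by linarith) (by norm_num)]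
    linear_combination hsq + hD_def
  have htarget : γ₀ * ((1 / 2) * ((1 - x) - Real.sqrt ((1 - x) ^ 2 - 4 * δ * x)))
      = ((γ₀ - γ₁) - Real.sqrt D) / 2 := by
    have hx : (1 - x) ^ 2 - 4 * δ * x = D / γ₀ ^ 2 := by
      rw [hDγ]; field_simp
    rw [hx]
    have hsd : Real.sqrt (D / γ₀ ^ 2) = Real.sqrt D / γ₀ := by
      rw [Real.sqrt_div hD, Real.sqrt_sq hγ₀.le]
    rw [hsd]
    show γ₀ * (1 / 2 * (1 - γ₁ / γ₀ - Real.sqrt D / γ₀)) = _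
    field_simp
  refine ⟨fm, fp, hfm, hfmfp, hF, ⟨⟨fp, ?_, ?_⟩, ?_⟩, hval.trans htarget.symm⟩
  · rw [hF]; exact ⟨hfmfp, le_refl _⟩
  · exact hval.trans htarget.symm
  · rintro y ⟨f, hfF, rfl⟩
    rw [hF, Set.mem_Icc] at hfF
    obtain ⟨hf1, hf2⟩ := hfF
    have hf0 : 0 < f := hfm.trans_le hf1
    show _ ≤ γ₀ * κ / f
    rw [htarget, ← hval]
    exact div_le_div_of_nonneg_left (mul_pos hγ₀ hκ).le hf0 hf2
end

section
/- Let A and B be n×n Hermitian positive semidefinite complex matrices, let N₀ := ker(A) ∩ ker(B) have dimension k, and let E₀ be an n×(n−k) complex matrix whose columns form an orthonormal basis of N₀^⊥. Then for every λ ∈ ℂ: det( (A + I_n) − λ·(B + I_n) ) = (1−λ)^k · det( (E₀ᴴAE₀ + I_{n−k}) − λ·(E₀ᴴBE₀ + I_{n−k}) ). In particular, the generalized eigenvalues of the pair (A + I, B + I) are exactly those of (E₀ᴴAE₀ + I, E₀ᴴBE₀ + I) together with the eigenvalue 1 with multiplicity k. -/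
open Matrix
open scoped ComplexOrder

/-- Let `A, B` be `n × n` Hermitian positive semidefinite complex
matrices, `N₀ := ker A ∩ ker B` of dimension `k`, and let `E₀` be an
`n × (n−k)` matrix whose columns form an orthonormal basis of `N₀ᗮ` (encoded by
`E₀ᴴ E₀ = 1` together with: the column span of `E₀` is exactly the orthogonal
complement of `N₀` for the standard inner product on `ℂⁿ`).  Then for every
`λ ∈ ℂ`:
`det((A + I) − λ(B + I)) = (1−λ)^k · det((E₀ᴴAE₀ + I) − λ(E₀ᴴBE₀ + I))`;
in particular the generalized eigenvalues of `(A + I, B + I)` are those of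
`(E₀ᴴAE₀ + I, E₀ᴴBE₀ + I)` together with `1` (with multiplicity `k`). -/
theorem stmt10 (n k : ℕ) (hk : k ≤ n)
    (A B : Matrix (Fin n) (Fin n) ℂ) (hA : A.PosSemidef) (hB : B.PosSemidef)
    (hdim : Module.finrank ℂ
        ↥(LinearMap.ker A.mulVecLin ⊓ LinearMap.ker B.mulVecLin) = k)
    (E₀ : Matrix (Fin n) (Fin (n - k)) ℂ)
    (hE1 : E₀ᴴ * E₀ = 1)
    (hE2 : ∀ w : Fin n → ℂ,
      (∃ v : Fin (n - k) → ℂ, E₀ *ᵥ v = w) ↔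
      (∀ u : Fin n → ℂ, A *ᵥ u = 0 → B *ᵥ u = 0 → star u ⬝ᵥ w = 0)) :
    (∀ lam : ℂ,
      ((A + 1) - lam • (B + 1)).det
        = (1 - lam) ^ k *
          ((E₀ᴴ * A * E₀ + 1) - lam • (E₀ᴴ * B * E₀ + 1)).det) ∧
    (∀ lam : ℂ,
      ((A + 1) - lam • (B + 1)).det = 0 ↔
        ((lam = 1 ∧ 1 ≤ k) ∨
          ((E₀ᴴ * A * E₀ + 1) - lam • (E₀ᴴ * B * E₀ + 1)).det = 0)) := by
  classical
  -- the common kernel, viewed inside Euclidean space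
  let N : Submodule ℂ (EuclideanSpace ℂ (Fin n)) :=
    (LinearMap.ker A.mulVecLin ⊓ LinearMap.ker B.mulVecLin).map
      (WithLp.linearEquiv 2 ℂ (Fin n → ℂ)).symm.toLinearMap
  have hdimN : Module.finrank ℂ ↥N = k := (LinearEquiv.finrank_map_eq _ _).trans hdim
  let b : OrthonormalBasis (Fin k) ℂ ↥N :=
    (stdOrthonormalBasis ℂ ↥N).reindex (finCongr hdimN)
  -- the matrix whose columns are the orthonormal basis of N
  let F : Matrix (Fin n) (Fin k) ℂ := Matrix.of fun i j => ((b j : EuclideanSpace ℂ (Fin n)) i)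
  have hmemA : ∀ j, A *ᵥ (fun i => F i j) = 0 := by
    intro j
    have h : (b j : EuclideanSpace ℂ (Fin n)) ∈ N := (b j).2
    obtain ⟨x, hx, hxe⟩ := Submodule.mem_map.mp h
    have hx' : (fun i => F i j) = x := by
      show (fun i => (↑(b j) : EuclideanSpace ℂ (Fin n)).ofLp i) = x; rw [← hxe]; rfl
    rw [hx']
    exact LinearMap.mem_ker.mp (Submodule.mem_inf.mp hx).1
  have hmemB : ∀ j, B *ᵥ (fun i => F i j) = 0 := by
    intro j
    have h : (b j : EuclideanSpace ℂ (Fin n)) ∈ N := (b j).2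
    obtain ⟨x, hx, hxe⟩ := Submodule.mem_map.mp h
    have hx' : (fun i => F i j) = x := by
      show (fun i => (↑(b j) : EuclideanSpace ℂ (Fin n)).ofLp i) = x; rw [← hxe]; rfl
    rw [hx']
    exact LinearMap.mem_ker.mp (Submodule.mem_inf.mp hx).2
  -- F has orthonormal columns
  have hFF : Fᴴ * F = 1 := by
    ext i j
    have horth := (orthonormal_iff_ite.mp b.orthonormal) i j
    rw [Submodule.coe_inner, PiLp.inner_apply] at horth
    simp only [RCLike.inner_apply] at horth
    simp only [Matrix.mul_apply, conjTranspose_apply, Matrix.one_apply]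
    simpa [F, mul_comm] using horth
  have hAF : A * F = 0 := by
    ext i j
    have := congrFun (hmemA j) i
    simpa [Matrix.mul_apply, Matrix.mulVec, dotProduct] using this
  have hBF : B * F = 0 := by
    ext i j
    have := congrFun (hmemB j) i
    simpa [Matrix.mul_apply, Matrix.mulVec, dotProduct] using this
  have hFA : Fᴴ * A = 0 := by
    have : (A * F)ᴴ = 0 := by rw [hAF]; simp
    rwa [conjTranspose_mul, hA.1.eq] at this
  have hFB : Fᴴ * B = 0 := by
    have : (B * F)ᴴ = 0 := by rw [hBF]; simp
    rwa [conjTranspose_mul, hB.1.eq] at this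
  -- columns of E₀ are orthogonal to columns of F
  have hEF : E₀ᴴ * F = 0 := by
    ext i j
    have hw : ∃ v : Fin (n - k) → ℂ, E₀ *ᵥ v = fun l => E₀ l i := by
      refine ⟨Pi.single i 1, ?_⟩
      rw [Matrix.mulVec_single]
      simp
      rfl
    have h0 := (hE2 (fun l => E₀ l i)).mp hw (fun l => F l j) (hmemA j) (hmemB j)
    have h0' : (∑ l, star (F l j) * E₀ l i) = 0 := by
      simpa [dotProduct] using h0
    have h1 : ∑ l, F l j * star (E₀ l i) = 0 := by
      have h2 := congrArg (starRingEnd ℂ) h0'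
      rw [map_sum, map_zero] at h2
      rw [← h2]
      refine Finset.sum_congr rfl fun l _ => ?_
      simp only [starRingEnd_apply, star_mul', star_star]
    rw [Matrix.mul_apply]
    simp only [conjTranspose_apply, Matrix.zero_apply]
    rw [← h1]
    refine Finset.sum_congr rfl fun l _ => ?_
    rw [mul_comm]
  have hFE : Fᴴ * E₀ = 0 := by
    have : (E₀ᴴ * F)ᴴ = 0 := by rw [hEF]; simp
    rwa [conjTranspose_mul, conjTranspose_conjTranspose] at this
  -- derived zero products
  have hEAF : E₀ᴴ * A * F = 0 := by rw [Matrix.mul_assoc, hAF, Matrix.mul_zero]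
  have hEBF : E₀ᴴ * B * F = 0 := by rw [Matrix.mul_assoc, hBF, Matrix.mul_zero]
  have hFAE : Fᴴ * A * E₀ = 0 := by rw [hFA, Matrix.zero_mul]
  have hFBE : Fᴴ * B * E₀ = 0 := by rw [hFB, Matrix.zero_mul]
  have hFAF : Fᴴ * A * F = 0 := by rw [hFA, Matrix.zero_mul]
  have hFBF : Fᴴ * B * F = 0 := by rw [hFB, Matrix.zero_mul]
  -- the unitary change of basis
  set W : Matrix (Fin n) (Fin (n - k) ⊕ Fin k) ℂ := fromCols E₀ F with hW
  have hWW : Wᴴ * W = 1 := by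
    rw [hW, conjTranspose_fromCols_eq_fromRows_conjTranspose, fromRows_mul_fromCols,
      hE1, hEF, hFE, hFF, Matrix.fromBlocks_one]
  have key : ∀ lam : ℂ,
      Wᴴ * ((A + 1) - lam • (B + 1)) * W =
        fromBlocks ((E₀ᴴ * A * E₀ + 1) - lam • (E₀ᴴ * B * E₀ + 1)) 0 0
          ((1 - lam) • (1 : Matrix (Fin k) (Fin k) ℂ)) := by
    intro lam
    rw [hW, conjTranspose_fromCols_eq_fromRows_conjTranspose, fromRows_mul,
      fromRows_mul_fromCols]
    have t1 : E₀ᴴ * ((A + 1) - lam • (B + 1)) * E₀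
        = (E₀ᴴ * A * E₀ + 1) - lam • (E₀ᴴ * B * E₀ + 1) := by
      simp [Matrix.mul_sub, Matrix.sub_mul, Matrix.mul_add, Matrix.add_mul,
        Matrix.mul_smul, Matrix.smul_mul, hE1]
    have t2 : E₀ᴴ * ((A + 1) - lam • (B + 1)) * F = 0 := by
      simp [Matrix.mul_sub, Matrix.sub_mul, Matrix.mul_add, Matrix.add_mul,
        Matrix.mul_smul, Matrix.smul_mul, hEAF, hEBF, hEF]
    have t3 : Fᴴ * ((A + 1) - lam • (B + 1)) * E₀ = 0 := by
      simp [Matrix.mul_sub, Matrix.sub_mul, Matrix.mul_add, Matrix.add_mul,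
        Matrix.mul_smul, Matrix.smul_mul, hFAE, hFBE, hFE]
    have t4 : Fᴴ * ((A + 1) - lam • (B + 1)) * F
        = (1 - lam) • (1 : Matrix (Fin k) (Fin k) ℂ) := by
      simp [Matrix.mul_sub, Matrix.sub_mul, Matrix.mul_add, Matrix.add_mul,
        Matrix.mul_smul, Matrix.smul_mul, hFAF, hFBF, hFF, sub_smul]
    rw [t1, t2, t3, t4]
  -- reindexing to make W square
  let e : Fin (n - k) ⊕ Fin k ≃ Fin n :=
    finSumFinEquiv.trans (finCongr (Nat.sub_add_cancel hk))
  have hdet : ∀ lam : ℂ,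
      ((A + 1) - lam • (B + 1)).det
        = (1 - lam) ^ k *
          ((E₀ᴴ * A * E₀ + 1) - lam • (E₀ᴴ * B * E₀ + 1)).det := by
    intro lam
    set M : Matrix (Fin n) (Fin n) ℂ := (A + 1) - lam • (B + 1) with hM
    set P : Matrix (Fin n) (Fin n) ℂ := W.submatrix id ⇑e.symm with hP
    have hPconj : Pᴴ = Wᴴ.submatrix ⇑e.symm id := by
      rw [hP, conjTranspose_submatrix]
    have hPP : Pᴴ * P = 1 := by
      rw [hPconj, hP]
      have : (Wᴴ.submatrix ⇑e.symm ⇑(Equiv.refl (Fin n))) *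
          (W.submatrix ⇑(Equiv.refl (Fin n)) ⇑e.symm) = (Wᴴ * W).submatrix ⇑e.symm ⇑e.symm :=
        Matrix.submatrix_mul_equiv Wᴴ W _ (Equiv.refl (Fin n)) _
      simpa [hWW, Matrix.submatrix_one_equiv] using this
    have hPMP : Pᴴ * M * P = (Wᴴ * M * W).submatrix ⇑e.symm ⇑e.symm := by
      rw [hPconj, hP]
      have h1 : (Wᴴ.submatrix ⇑e.symm ⇑(Equiv.refl (Fin n))) *
          (M.submatrix ⇑(Equiv.refl (Fin n)) ⇑(Equiv.refl (Fin n)))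
          = (Wᴴ * M).submatrix ⇑e.symm ⇑(Equiv.refl (Fin n)) :=
        Matrix.submatrix_mul_equiv Wᴴ M _ (Equiv.refl (Fin n)) _
      have h2 : ((Wᴴ * M).submatrix ⇑e.symm ⇑(Equiv.refl (Fin n))) *
          (W.submatrix ⇑(Equiv.refl (Fin n)) ⇑e.symm)
          = (Wᴴ * M * W).submatrix ⇑e.symm ⇑e.symm :=
        Matrix.submatrix_mul_equiv (Wᴴ * M) W _ (Equiv.refl (Fin n)) _
      simp only [Equiv.coe_refl, Matrix.submatrix_id_id] at h1 h2
      rw [← h2, ← h1]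
    have hdet1 : (Pᴴ * M * P).det = M.det := by
      rw [Matrix.det_mul, Matrix.det_mul]
      have : Pᴴ.det * P.det = 1 := by
        rw [← Matrix.det_mul, hPP, Matrix.det_one]
      calc Pᴴ.det * M.det * P.det = M.det * (Pᴴ.det * P.det) := by ring
        _ = M.det := by rw [this, mul_one]
    have hdet2 : (Pᴴ * M * P).det = (Wᴴ * M * W).det := by
      rw [hPMP, Matrix.det_submatrix_equiv_self]
    rw [← hdet1, hdet2, key lam, Matrix.det_fromBlocks_zero₂₁, Matrix.det_smul,
      Matrix.det_one, mul_one, Fintype.card_fin, mul_comm]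
  refine ⟨hdet, fun lam => ?_⟩
  rw [hdet lam, mul_eq_zero, pow_eq_zero_iff', sub_eq_zero]
  constructor
  · rintro (⟨h1, h2⟩ | h)
    · exact Or.inl ⟨h1.symm, Nat.one_le_iff_ne_zero.mpr h2⟩
    · exact Or.inr h
  · rintro (⟨h1, h2⟩ | h)
    · exact Or.inl ⟨h1.symm, Nat.one_le_iff_ne_zero.mp h2⟩
    · exact Or.inr h
end

section
/- Let Q be an L×L Hermitian positive definite complex matrix, A an L×D complex matrix of rank D (so AᴴQ⁻¹A is invertible), and Φ a D×D Hermitian complex matrix. Then for every λ ∈ ℂ with λ ≠ 0: det( λ·(AᴴQ⁻¹A)⁻¹ − Φ ) = 0 if and only if det( λ·Q − A·Φ·Aᴴ ) = 0. That is, the pairs (Φ, (AᴴQ⁻¹A)⁻¹) and (AΦAᴴ, Q) have the same nonzero generalized eigenvalues. -/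
open Matrix
open scoped ComplexOrder

/-- Sylvester-type lemma: for `lam ≠ 0`, `det (lam•1 - M*N) = 0 ↔ det (lam•1 - N*M) = 0`. -/
lemma aux_det_smul_one_sub_mul_comm {m n : ℕ}
    (M : Matrix (Fin m) (Fin n) ℂ) (N : Matrix (Fin n) (Fin m) ℂ)
    {lam : ℂ} (h : lam ≠ 0) :
    ((lam • (1 : Matrix (Fin m) (Fin m) ℂ) - M * N).det = 0 ↔
      (lam • (1 : Matrix (Fin n) (Fin n) ℂ) - N * M).det = 0) := by
  have key1 : lam • (1 : Matrix (Fin m) (Fin m) ℂ) - M * N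
      = lam • ((1 : Matrix (Fin m) (Fin m) ℂ) - (lam⁻¹ • M) * N) := by
    rw [smul_sub, Matrix.smul_mul, smul_smul, mul_inv_cancel₀ h, one_smul]
  have key2 : lam • (1 : Matrix (Fin n) (Fin n) ℂ) - N * M
      = lam • ((1 : Matrix (Fin n) (Fin n) ℂ) - N * (lam⁻¹ • M)) := by
    rw [smul_sub, Matrix.mul_smul, smul_smul, mul_inv_cancel₀ h, one_smul]
  rw [key1, key2, det_smul, det_smul, det_one_sub_mul_comm]
  simp [pow_ne_zero _ h]

/-- Let `Q` be an `L × L` Hermitian positive definite matrix, `A`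
an `L × D` complex matrix of rank `D` (so `Aᴴ Q⁻¹ A` is invertible), and `Φ` a
`D × D` Hermitian matrix.  Then for every `λ ≠ 0`:
`det(λ·(AᴴQ⁻¹A)⁻¹ − Φ) = 0 ↔ det(λ·Q − A·Φ·Aᴴ) = 0`; that is, the pairs
`(Φ, (AᴴQ⁻¹A)⁻¹)` and `(AΦAᴴ, Q)` have the same nonzero generalized
eigenvalues. -/
theorem stmt18 (L D : ℕ) (Q : Matrix (Fin L) (Fin L) ℂ) (hQ : Q.PosDef)
    (A : Matrix (Fin L) (Fin D) ℂ) (hrank : A.rank = D)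
    (Φ : Matrix (Fin D) (Fin D) ℂ) (hΦ : Φ.IsHermitian) :
    ∀ lam : ℂ, lam ≠ 0 →
      ((lam • (Aᴴ * Q⁻¹ * A)⁻¹ - Φ).det = 0 ↔
        (lam • Q - A * Φ * Aᴴ).det = 0) := by
  intro lam hlam
  have hQinv : Q⁻¹.PosDef := hQ.inv
  -- A has injective mulVec
  have hAinj : Function.Injective A.mulVec := by
    rw [Matrix.mulVec_injective_iff, linearIndependent_iff_card_eq_finrank_span,
      Fintype.card_fin]
    have h1 : Set.finrank ℂ (Set.range fun i => Aᵀ i) = A.rank :=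
      (Matrix.rank_eq_finrank_span_cols A).symm
    exact (h1.trans hrank).symm
  -- B := Aᴴ Q⁻¹ A is positive definite
  set B := Aᴴ * Q⁻¹ * A with hB
  have hBpd : B.PosDef := by
    refine Matrix.PosDef.of_dotProduct_mulVec_pos (Matrix.isHermitian_conjTranspose_mul_mul A hQinv.1) fun x hx => ?_
    have hAx : A *ᵥ x ≠ 0 := by
      intro h0
      exact hx (hAinj (by simpa using h0))
    have := hQinv.dotProduct_mulVec_pos hAx
    simpa only [hB, ← Matrix.mulVec_mulVec, Matrix.star_mulVec, Matrix.dotProduct_mulVec,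
      Matrix.vecMul_vecMul] using this
  have hBunit : IsUnit B := hBpd.isUnit
  have hBdet : B.det ≠ 0 := by
    simpa [Matrix.isUnit_iff_isUnit_det] using hBunit
  have hQunit : IsUnit Q := hQ.isUnit
  have hQdet : Q.det ≠ 0 := by
    simpa [Matrix.isUnit_iff_isUnit_det] using hQunit
  haveI := hBunit.invertible
  haveI := hQunit.invertible
  -- LHS : det (lam • B⁻¹ - Φ) = 0 ↔ det (lam • 1 - Φ * B) = 0
  have lhs_eq : (lam • B⁻¹ - Φ).det * B.det = (lam • 1 - Φ * B).det := by
    rw [← Matrix.det_mul, Matrix.sub_mul, Matrix.smul_mul,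
      Matrix.nonsing_inv_mul _ hBdet.isUnit]
  -- RHS : det (lam • Q - A Φ Aᴴ) = 0 ↔ det (lam • 1 - Q⁻¹ A Φ Aᴴ) = 0
  have rhs_eq : Q.det * (lam • 1 - (Q⁻¹ * A) * (Φ * Aᴴ)).det = (lam • Q - A * Φ * Aᴴ).det := by
    rw [← Matrix.det_mul, Matrix.mul_sub, Matrix.mul_smul, Matrix.mul_one]
    congr 1
    simp [← Matrix.mul_assoc, Matrix.mul_nonsing_inv _ hQdet.isUnit]
  have syl := aux_det_smul_one_sub_mul_comm (Q⁻¹ * A) (Φ * Aᴴ) hlam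
  have hNM : (Φ * Aᴴ) * (Q⁻¹ * A) = Φ * B := by
    rw [hB]; simp [Matrix.mul_assoc]
  rw [hNM] at syl
  constructor
  · intro h
    rw [← rhs_eq]
    have : (lam • 1 - Φ * B).det = 0 := by
      rw [← lhs_eq, h, zero_mul]
    rw [syl.mpr this]
    simp
  · intro h
    have h1 : (lam • 1 - (Q⁻¹ * A) * (Φ * Aᴴ)).det = 0 := by
      rw [← rhs_eq] at h
      exact (mul_eq_zero.mp h).resolve_left hQdet
    have h2 := syl.mp h1
    have := lhs_eq
    rw [h2] at this
    exact (mul_eq_zero.mp this).resolve_right hBdet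
end
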